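/- Let K be a subgroup of G, N a normal subgroup of K, and g ∈ G an element with g·K·g⁻¹ = K and g·N·g⁻¹ = N. Suppose V is semisimple as a K-module, let (d, W) be a simple representation of K whose isotypic component V_d in V is nonzero and finite-dimensional, and let E : V → V be the 𝕜-linear projection onto V_d along the sum of all the other isotypic components of V. Suppose moreover that W, viewed as a representation of N by restriction, is an internal direct sum of finitely many simple N-submodules (d₁, W₁), …, (dₙ, Wₙ). Define Θ_d(g) to be the trace of the endomorphism of V_d given by u ↦ E(π(g) u). If Θ_d(g) ≠ 0, then for some i ∈ {1, …, n} the g-twist ᵍdᵢ (the representation of N on Wᵢ given by ᵍdᵢ(m) := dᵢ(g⁻¹·m·g)) is N-isomorphic to dᵢ. (This is the second assertion of the paper's Proposition on partial traces.) -/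

import Mathlib

variable {𝕜 : Type*} [Field 𝕜] {G : Type*} [Group G]
  {V : Type*} [AddCommGroup V] [Module 𝕜 V]

/-- `W` is a `K`-submodule of `V` (for the representation `π` of `G` on `V`). -/
def IsSubrep (π : G →* (V ≃ₗ[𝕜] V)) (K : Subgroup G) (W : Submodule 𝕜 V) : Prop :=
  ∀ c ∈ K, ∀ x ∈ W, π c x ∈ W

/-- Two submodules of `V` are `K`-isomorphic: there is a `𝕜`-linear isomorphism between
them intertwining the `K`-actions. -/
def SubrepIso (π : G →* (V ≃ₗ[𝕜] V)) (K : Subgroup G) (W₁ W₂ : Submodule 𝕜 V) : Prop :=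
  ∃ e : W₁ ≃ₗ[𝕜] W₂, ∀ c ∈ K, ∀ (x : W₁) (hx : π c (x : V) ∈ W₁),
    (e ⟨π c (x : V), hx⟩ : V) = π c ((e x : V))

/-- A submodule `W'` of `V` is `K`-isomorphic to the abstract representation `(d, Wd)`
of `K`. -/
def IsoToRep (π : G →* (V ≃ₗ[𝕜] V)) (K : Subgroup G) (W' : Submodule 𝕜 V)
    {Wd : Type*} [AddCommGroup Wd] [Module 𝕜 Wd] (d : K →* (Wd ≃ₗ[𝕜] Wd)) : Prop :=
  ∃ e : W' ≃ₗ[𝕜] Wd, ∀ (c : K) (x : W') (hx : π (c : G) (x : V) ∈ W'),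
    e ⟨π (c : G) (x : V), hx⟩ = d c (e x)

/-- The `d`-isotypic component of `V`: the sum of all `K`-submodules of `V` that are
`K`-isomorphic to the representation `(d, Wd)`. -/
def IsotypicComponent (π : G →* (V ≃ₗ[𝕜] V)) (K : Subgroup G)
    {Wd : Type*} [AddCommGroup Wd] [Module 𝕜 Wd] (d : K →* (Wd ≃ₗ[𝕜] Wd)) :
    Submodule 𝕜 V :=
  sSup {W' : Submodule 𝕜 V | IsSubrep π K W' ∧ IsoToRep π K W' d}

/-- The abstract representation `(d, Wd)` of `K` is simple. -/
def IsSimpleRep {G : Type*} [Group G] {K : Subgroup G}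
    {Wd : Type*} [AddCommGroup Wd] [Module 𝕜 Wd] (d : K →* (Wd ≃ₗ[𝕜] Wd)) : Prop :=
  (⊤ : Submodule 𝕜 Wd) ≠ ⊥ ∧
    ∀ U : Submodule 𝕜 Wd, (∀ (c : K), ∀ x ∈ U, d c x ∈ U) → U = ⊥ ∨ U = ⊤

/-- Conjugation `c ↦ g⁻¹ c g` as a map `K → K`, for `g` normalizing `K`. -/
def conjElem {G : Type*} [Group G] (K : Subgroup G) (g : G)
    (hg : ∀ x : G, g * x * g⁻¹ ∈ K ↔ x ∈ K) (c : K) : K :=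
  ⟨g⁻¹ * (c : G) * g, (hg _).mp (by
    have h : g * (g⁻¹ * (c : G) * g) * g⁻¹ = (c : G) := by group
    rw [h]; exact c.2)⟩

/-- The `g`-twist `ᵍd` of a representation `d` of `K`, given by `ᵍd(c) = d(g⁻¹ c g)`. -/
def twistRep {G : Type*} [Group G] {K : Subgroup G} (g : G)
    (hg : ∀ x : G, g * x * g⁻¹ ∈ K ↔ x ∈ K)
    {Wd : Type*} [AddCommGroup Wd] [Module 𝕜 Wd] (d : K →* (Wd ≃ₗ[𝕜] Wd)) :
    K →* (Wd ≃ₗ[𝕜] Wd) where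
  toFun c := d (conjElem K g hg c)
  map_one' := by
    have h : conjElem K g hg 1 = 1 := by
      apply Subtype.ext; simp [conjElem]
    show d (conjElem K g hg 1) = 1
    rw [h, map_one]
  map_mul' c₁ c₂ := by
    have h : conjElem K g hg (c₁ * c₂) = conjElem K g hg c₁ * conjElem K g hg c₂ := by
      apply Subtype.ext; simp only [conjElem, Subgroup.coe_mul, MulMemClass.mk_mul_mk]
      group
    show d (conjElem K g hg (c₁ * c₂)) = d (conjElem K g hg c₁) * d (conjElem K g hg c₂)
    rw [h, map_mul]

/-- `W` is a simple (irreducible) `K`-submodule of `V`. -/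
def IsSimpleSubrep (π : G →* (V ≃ₗ[𝕜] V)) (K : Subgroup G) (W : Submodule 𝕜 V) : Prop :=
  IsSubrep π K W ∧ W ≠ ⊥ ∧
    ∀ U : Submodule 𝕜 V, U ≤ W → IsSubrep π K U → U = ⊥ ∨ U = W

/-- `U ⊆ Wd` is invariant under the restriction to `N` of the representation `d`
of `K` (here `N` is a subgroup of `G` contained in `K`). -/
def IsNInvariant {G : Type*} [Group G] {K : Subgroup G} (N : Subgroup G)
    {Wd : Type*} [AddCommGroup Wd] [Module 𝕜 Wd] (d : K →* (Wd ≃ₗ[𝕜] Wd))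
    (U : Submodule 𝕜 Wd) : Prop :=
  ∀ (m : K), (m : G) ∈ N → ∀ x ∈ U, d m x ∈ U

/-- `U ⊆ Wd` is a simple `N`-submodule for the restriction of `d` to `N`. -/
def IsSimpleNInvariant {G : Type*} [Group G] {K : Subgroup G} (N : Subgroup G)
    {Wd : Type*} [AddCommGroup Wd] [Module 𝕜 Wd] (d : K →* (Wd ≃ₗ[𝕜] Wd))
    (U : Submodule 𝕜 Wd) : Prop :=
  IsNInvariant N d U ∧ U ≠ ⊥ ∧
    ∀ U₀ : Submodule 𝕜 Wd, U₀ ≤ U → IsNInvariant N d U₀ → U₀ = ⊥ ∨ U₀ = U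


namespace PTaux

open LinearMap

variable {k : Type*} [Field k] {X : Type*} [AddCommGroup X] [Module k X]
  {Γ : Type*} [Group Γ]

/-- `S` is invariant under the representation `ρ`. -/
def Inv (ρ : Γ →* (X ≃ₗ[k] X)) (S : Submodule k X) : Prop :=
  ∀ γ : Γ, ∀ x ∈ S, ρ γ x ∈ S

/-- `S` is a simple invariant submodule. -/
def SimpleI (ρ : Γ →* (X ≃ₗ[k] X)) (S : Submodule k X) : Prop :=
  Inv ρ S ∧ S ≠ ⊥ ∧ ∀ U ≤ S, Inv ρ U → U = ⊥ ∨ U = S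

/-- There is an automorphism of `S` intertwining the `ψ`-twisted action with the plain one. -/
def TwIso (ρ : Γ →* (X ≃ₗ[k] X)) (ψ : Γ →* Γ) (S : Submodule k X) : Prop :=
  ∃ e : S ≃ₗ[k] S, ∀ (m : Γ) (x : S) (hx : ρ (ψ m) (x : X) ∈ S),
    ((e ⟨ρ (ψ m) (x : X), hx⟩ : S) : X) = ρ m ((e x : X))

theorem Inv.bot (ρ : Γ →* (X ≃ₗ[k] X)) : Inv ρ (⊥ : Submodule k X) := by
  intro γ x hx
  simp only [Submodule.mem_bot] at hx ⊢
  rw [hx, map_zero]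

theorem Inv.sup {ρ : Γ →* (X ≃ₗ[k] X)} {S T : Submodule k X} (hS : Inv ρ S) (hT : Inv ρ T) :
    Inv ρ (S ⊔ T) := by
  intro γ x hx
  obtain ⟨y, hy, z, hz, rfl⟩ := Submodule.mem_sup.mp hx
  rw [map_add]
  exact Submodule.add_mem_sup (hS γ y hy) (hT γ z hz)

theorem Inv.inf {ρ : Γ →* (X ≃ₗ[k] X)} {S T : Submodule k X} (hS : Inv ρ S) (hT : Inv ρ T) :
    Inv ρ (S ⊓ T) :=
  fun γ x hx => ⟨hS γ x hx.1, hT γ x hx.2⟩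

theorem Inv.finsetSup {ρ : Γ →* (X ≃ₗ[k] X)} (T : Finset (Submodule k X))
    (hT : ∀ t ∈ T, Inv ρ t) : Inv ρ (T.sup id) := by
  classical
  induction T using Finset.induction_on with
  | empty => simpa using Inv.bot ρ
  | insert a s hnotmem ih =>
    rw [Finset.sup_insert]
    exact (hT a (Finset.mem_insert_self a s)).sup
      (ih fun t ht => hT t (Finset.mem_insert_of_mem ht))

/-- Twisted Schur: a twisted-equivariant endomorphism preserving a simple invariant
submodule either vanishes on it or induces a twisted intertwining automorphism. -/
theorem schur_tw {ρ : Γ →* (X ≃ₗ[k] X)} {ψ : Γ →* Γ} (hψ : Function.Surjective ψ)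
    {S : Submodule k X} (hS : SimpleI ρ S) (φ : X →ₗ[k] X)
    (hφ : ∀ (m : Γ) (x : X), φ (ρ (ψ m) x) = ρ m (φ x))
    (hrange : ∀ x ∈ S, φ x ∈ S) (hnt : ¬ TwIso ρ ψ S) :
    ∀ x ∈ S, φ x = 0 := by
  classical
  -- the image of S
  have hIinv : Inv ρ (S.map φ) := by
    intro γ x hx
    obtain ⟨y, hy, rfl⟩ := hx
    rw [← hφ γ y]
    exact ⟨ρ (ψ γ) y, hS.1 (ψ γ) y hy, rfl⟩
  have hIle : S.map φ ≤ S := by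
    rintro x ⟨y, hy, rfl⟩; exact hrange y hy
  rcases hS.2.2 _ hIle hIinv with hI | hI
  · intro x hx
    have : φ x ∈ S.map φ := ⟨x, hx, rfl⟩
    rwa [hI, Submodule.mem_bot] at this
  · -- image is all of S; consider the kernel
    have hKinv : Inv ρ (ker φ ⊓ S) := by
      intro γ x hx
      obtain ⟨m, rfl⟩ := hψ γ
      refine ⟨mem_ker.mpr ?_, hS.1 (ψ m) x hx.2⟩
      rw [hφ m x, mem_ker.mp hx.1, map_zero]
    rcases hS.2.2 _ inf_le_right hKinv with hK | hK
    · -- kernel trivial: build the intertwiner, contradiction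
      exfalso
      apply hnt
      have hinj : ∀ x ∈ S, φ x = 0 → x = 0 := by
        intro x hx h0
        have : x ∈ ker φ ⊓ S := ⟨mem_ker.mpr h0, hx⟩
        rwa [hK, Submodule.mem_bot] at this
      let f : S →ₗ[k] S := φ.restrict hrange
      have hfbij : Function.Bijective f := by
        constructor
        · intro a b hab
          have : φ (a : X) = φ (b : X) := congrArg Subtype.val hab
          have := sub_eq_zero.mpr this
          rw [← map_sub] at this
          have := hinj _ (sub_mem a.2 b.2) this
          exact Subtype.ext (sub_eq_zero.mp (by simpa using this))
        · intro y
          have : (y : X) ∈ S.map φ := by rw [hI]; exact y.2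
          obtain ⟨x, hx, hxy⟩ := this
          exact ⟨⟨x, hx⟩, Subtype.ext hxy⟩
      refine ⟨LinearEquiv.ofBijective f hfbij, ?_⟩
      intro m x hx
      show (φ.restrict hrange ⟨ρ (ψ m) (x : X), hx⟩ : X) = ρ m ((f x : X))
      rw [restrict_apply, restrict_apply]
      exact hφ m x
    · -- kernel is everything
      intro x hx
      have : x ∈ ker φ ⊓ S := by rw [hK]; exact hx
      exact mem_ker.mp this.1

/-- Extend a `sSup`-independent set by a disjoint nonbot element (modular lattice). -/
theorem sSupIndep_insert' {α : Type*} [CompleteLattice α] [IsModularLattice α]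
    {s : Set α} {t : α} (hs : sSupIndep s) (ht : Disjoint t (sSup s)) (htb : t ≠ ⊥) :
    sSupIndep (insert t s) := by
  classical
  have htns : t ∉ s := by
    intro hmem
    exact htb (disjoint_self.mp (ht.mono_right (le_sSup hmem)))
  intro a ha
  rcases Set.mem_insert_iff.mp ha with rfl | has
  · have : insert a s \ {a} ⊆ s := by
      intro x hx
      rcases Set.mem_insert_iff.mp hx.1 with rfl | h
      · exact absurd rfl hx.2
      · exact h
    exact ht.mono_right (sSup_le_sSup this)
  · have hne : a ≠ t := fun h => htns (h ▸ has)
    have hset : insert t s \ {a} = insert t (s \ {a}) := by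
      ext x
      simp only [Set.mem_diff, Set.mem_insert_iff, Set.mem_singleton_iff]
      constructor
      · rintro ⟨h1 | h1, h2⟩
        · exact Or.inl h1
        · exact Or.inr ⟨h1, h2⟩
      · rintro (rfl | ⟨h1, h2⟩)
        · exact ⟨Or.inl rfl, hne.symm⟩
        · exact ⟨Or.inr h1, h2⟩
    rw [hset, sSup_insert]
    have hab : Disjoint a (sSup (s \ {a})) := hs has
    have habt : Disjoint (a ⊔ sSup (s \ {a})) t := by
      refine Disjoint.symm (ht.mono_right ?_)
      refine sup_le (le_sSup has) (sSup_le_sSup Set.diff_subset)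
    have := hab.disjoint_sup_right_of_disjoint_sup_left habt
    rwa [sup_comm] at this

/-- Greedy extraction of an independent subfamily with the same span, from a finite
family of simple invariant submodules. -/
theorem greedy {ρ : Γ →* (X ≃ₗ[k] X)} (T : Finset (Submodule k X))
    (hT : ∀ t ∈ T, SimpleI ρ t) :
    ∃ S : Finset (Submodule k X), ↑S ⊆ (T : Set (Submodule k X)) ∧
      sSupIndep (S : Set (Submodule k X)) ∧ S.sup id = T.sup id := by
  classical
  induction T using Finset.induction_on with
  | empty => exact ⟨∅, by simp, by simpa using sSupIndep_empty, rfl⟩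
  | insert t T' hnotmem ih =>
    obtain ⟨S, hSsub, hSind, hSsup⟩ := ih (fun u hu => hT u (Finset.mem_insert_of_mem hu))
    by_cases hle : t ≤ S.sup _root_.id
    · refine ⟨S, ?_, hSind, ?_⟩
      · exact hSsub.trans (Finset.coe_subset.mpr (Finset.subset_insert _ _))
      · rw [Finset.sup_insert, hSsup]
        exact (sup_eq_right.mpr (hSsup ▸ hle)).symm
    · have htS := hT t (Finset.mem_insert_self _ _)
      have hinv : Inv ρ (t ⊓ S.sup _root_.id) :=
        htS.1.inf (Inv.finsetSup S (fun u hu => (hT u (Finset.mem_insert_of_mem (hSsub hu))).1))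
      have hcase := htS.2.2 _ inf_le_left hinv
      have hdisj : Disjoint t (S.sup _root_.id) := by
        rcases hcase with h | h
        · exact disjoint_iff.mpr h
        · exact absurd (h ▸ inf_le_right : t ≤ S.sup _root_.id) hle
      have htnotS : t ∉ S := fun hmem => hle (Finset.le_sup (f := _root_.id) hmem)
      refine ⟨insert t S, ?_, ?_, ?_⟩
      · rw [Finset.coe_insert, Finset.coe_insert]
        exact Set.insert_subset_insert hSsub
      · rw [Finset.coe_insert]
        refine sSupIndep_insert' hSind ?_ htS.2.1
        rwa [← Finset.sup_id_eq_sSup]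
      · rw [Finset.sup_insert, Finset.sup_insert, hSsup]

section Proj

variable {ι : Type*} [Fintype ι] [DecidableEq ι] {Y : ι → Submodule k X}

/-- Projection onto the `i`-th factor of an internal direct sum. -/
noncomputable def prj (h : DirectSum.IsInternal Y) (i : ι) : X →ₗ[k] X where
  toFun x := (((LinearEquiv.ofBijective (DirectSum.coeLinearMap Y) h).symm x) i : X)
  map_add' x y := by simp only [map_add, DirectSum.add_apply, Submodule.coe_add]
  map_smul' c x := by simp only [map_smul, DirectSum.smul_apply, SetLike.val_smul,
    RingHom.id_apply]

theorem prj_mem (h : DirectSum.IsInternal Y) (i : ι) (x : X) : prj h i x ∈ Y i :=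
  (((LinearEquiv.ofBijective (DirectSum.coeLinearMap Y) h).symm x) i).2

theorem prj_of_mem (h : DirectSum.IsInternal Y) {i : ι} {x : X} (hx : x ∈ Y i) :
    prj h i x = x := by
  show ((((LinearEquiv.ofBijective (DirectSum.coeLinearMap Y) h).symm x) i : X)) = x
  rw [h.ofBijective_coeLinearMap_of_mem hx]

theorem prj_of_mem_ne (h : DirectSum.IsInternal Y) {i j : ι} (hij : j ≠ i) {x : X}
    (hx : x ∈ Y i) : prj h j x = 0 := by
  show ((((LinearEquiv.ofBijective (DirectSum.coeLinearMap Y) h).symm x) j : X)) = 0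
  have := h.ofBijective_coeLinearMap_of_ne hij.symm (⟨x, hx⟩ : Y i)
  rw [show ((⟨x, hx⟩ : Y i) : X) = x from rfl] at this
  rw [this]
  rfl

theorem sum_prj (h : DirectSum.IsInternal Y) (x : X) : ∑ i, prj h i x = x := by
  classical
  set w := (LinearEquiv.ofBijective (DirectSum.coeLinearMap Y) h).symm x with hw
  have hx : DirectSum.coeLinearMap Y w = x := by
    rw [hw]; exact (LinearEquiv.ofBijective (DirectSum.coeLinearMap Y) h).apply_symm_apply x
  calc ∑ i, prj h i x = ∑ i, DirectSum.coeLinearMap Y (DirectSum.of (fun i => ↥(Y i)) i (w i)) := by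
        refine Finset.sum_congr rfl (fun i _ => ?_)
        rw [DirectSum.coeLinearMap_of]
        rfl
    _ = DirectSum.coeLinearMap Y (∑ i, DirectSum.of (fun i => ↥(Y i)) i (w i)) := by
        rw [map_sum]
    _ = x := by rw [DirectSum.sum_univ_of, hx]

theorem prj_comm {ρ : Γ →* (X ≃ₗ[k] X)} (h : DirectSum.IsInternal Y)
    (hinv : ∀ j, Inv ρ (Y j)) (i : ι) (γ : Γ) (x : X) :
    prj h i (ρ γ x) = ρ γ (prj h i x) := by
  classical
  conv_lhs => rw [← sum_prj h x]
  rw [map_sum, map_sum]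
  rw [Finset.sum_eq_single i]
  · exact prj_of_mem h (hinv i γ _ (prj_mem h i x))
  · intro j _ hj
    exact prj_of_mem_ne h hj.symm (hinv j γ _ (prj_mem h j x))
  · intro hnot
    exact absurd (Finset.mem_univ i) hnot

end Proj

/-- Core lemma: if a finite-dimensional space is spanned by simple invariant submodules
admitting no twisted self-intertwiner, then any twisted-equivariant endomorphism has
trace zero. -/
theorem core [FiniteDimensional k X] (ρ : Γ →* (X ≃ₗ[k] X)) (ψ : Γ →* Γ)
    (hψ : Function.Surjective ψ) (A : X →ₗ[k] X)
    (hA : ∀ (m : Γ) (x : X), A (ρ (ψ m) x) = ρ m (A x))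
    (𝒮 : Set (Submodule k X)) (h1 : ∀ S ∈ 𝒮, SimpleI ρ S)
    (h2 : ∀ S ∈ 𝒮, ¬ TwIso ρ ψ S) (hgen : sSup 𝒮 = ⊤) :
    trace k X A = 0 := by
  classical
  haveI : IsNoetherian k X := IsNoetherian.iff_fg.mpr inferInstance
  have hfg : (⊤ : Submodule k X).FG := IsNoetherian.noetherian ⊤
  obtain ⟨T, hT𝒮, hTsup⟩ := (CompleteLattice.isCompactElement_iff_exists_le_sSup_of_le_sSup _ (⊤ : Submodule k X)).mp ((Submodule.fg_iff_compact ⊤).mp hfg) 𝒮 (le_of_eq hgen.symm)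
  obtain ⟨S, hS𝒮', hSind, hSsup⟩ := greedy (ρ := ρ) T (fun t ht => h1 t (hT𝒮 ht))
  have hS𝒮 : (↑S : Set (Submodule k X)) ⊆ 𝒮 := fun x hx => hT𝒮 (hS𝒮' hx)
  have hind : iSupIndep (fun i : (S : Set (Submodule k X)) => (i : Submodule k X)) :=
    (sSupIndep_iff _).mp hSind
  have hsup : ⨆ i : (S : Set (Submodule k X)), (i : Submodule k X) = ⊤ := by
    rw [← sSup_eq_iSup', ← Finset.sup_id_eq_sSup, hSsup]
    exact le_antisymm le_top hTsup
  have hint : DirectSum.IsInternal (fun i : (S : Set (Submodule k X)) => (i : Submodule k X)) :=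
    DirectSum.isInternal_submodule_of_iSupIndep_of_iSup_eq_top hind hsup
  set P := fun i : (S : Set (Submodule k X)) => prj hint i with hP
  have hPinv : ∀ j : (S : Set (Submodule k X)), Inv ρ ((j : Submodule k X)) :=
    fun j => (h1 _ (hS𝒮 j.2)).1
  have hAsum : A = ∑ i : (S : Set (Submodule k X)), A ∘ₗ P i := by
    ext x
    rw [LinearMap.sum_apply]
    conv_lhs => rw [← sum_prj hint x]
    rw [map_sum]
    rfl
  rw [hAsum, map_sum]
  refine Finset.sum_eq_zero (fun i _ => ?_)
  have h0 : ∀ x ∈ (i : Submodule k X), P i (A x) = 0 := by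
    refine schur_tw hψ (h1 _ (hS𝒮 i.2)) (P i ∘ₗ A) ?_ ?_ (h2 _ (hS𝒮 i.2))
    · intro m x
      rw [comp_apply, comp_apply, hA m x, prj_comm hint hPinv]
    · intro x _
      exact prj_mem hint i (A x)
  have hidem : A ∘ₗ P i = (A ∘ₗ P i) ∘ₗ P i := by
    ext x
    simp only [comp_apply]
    rw [prj_of_mem hint (prj_mem hint i x)]
  have hz : P i ∘ₗ (A ∘ₗ P i) = 0 := by
    ext x
    exact h0 (P i x) (prj_mem hint i x)
  rw [hidem, ← Module.End.mul_eq_comp, ← Module.End.mul_eq_comp, trace_mul_comm, Module.End.mul_eq_comp, Module.End.mul_eq_comp, hz, map_zero]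

section Res

variable (ρ : Γ →* (X ≃ₗ[k] X)) {D₀ : Submodule k X}

private theorem rho_cancel (γ : Γ) (x : X) : ρ γ (ρ γ⁻¹ x) = x := by
  have h1 : ρ γ (ρ γ⁻¹ x) = ρ (γ * γ⁻¹) x := by rw [map_mul]; rfl
  rw [h1, mul_inv_cancel, map_one]
  rfl

/-- Restriction of a representation to an invariant submodule. -/
noncomputable def resRep (hD : Inv ρ D₀) : Γ →* (↥D₀ ≃ₗ[k] ↥D₀) where
  toFun γ := LinearEquiv.ofLinear
    (((ρ γ).toLinearMap).restrict (fun x hx => hD γ x hx))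
    (((ρ γ⁻¹).toLinearMap).restrict (fun x hx => hD γ⁻¹ x hx))
    (by ext x; exact congrArg Subtype.val (Subtype.ext (rho_cancel ρ γ (x : X)) :
      (⟨ρ γ (ρ γ⁻¹ (x : X)), _⟩ : D₀) = ⟨(x : X), x.2⟩))
    (by ext x; exact congrArg Subtype.val (Subtype.ext (by
      conv_rhs => rw [← rho_cancel ρ γ⁻¹ (x : X)]
      rw [inv_inv]) : (⟨ρ γ⁻¹ (ρ γ (x : X)), _⟩ : D₀) = ⟨(x : X), x.2⟩))
  map_one' := by
    apply LinearEquiv.toLinearMap_injective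
    ext x
    show ρ (1 : Γ) (x : X) = (x : X)
    rw [map_one]; rfl
  map_mul' γ₁ γ₂ := by
    apply LinearEquiv.toLinearMap_injective
    ext x
    show ρ (γ₁ * γ₂) (x : X) = ρ γ₁ (ρ γ₂ (x : X))
    rw [map_mul]; rfl

theorem resRep_coe (hD : Inv ρ D₀) (γ : Γ) (x : ↥D₀) :
    ((resRep ρ hD γ x : ↥D₀) : X) = ρ γ (x : X) := rfl

theorem map_sSup'' {Y : Type*} [AddCommGroup Y] [Module k Y] (f : X →ₗ[k] Y)
    (s : Set (Submodule k X)) :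
    Submodule.map f (sSup s) = sSup (Submodule.map f '' s) := by
  rw [sSup_eq_iSup', Submodule.map_iSup, sSup_image, iSup_subtype']

/-- Transfer of the core lemma to an invariant finite-dimensional submodule. -/
theorem outer (ψ : Γ →* Γ) (hψ : Function.Surjective ψ)
    (D₀ : Submodule k X) [FiniteDimensional k ↥D₀] (hD : Inv ρ D₀)
    (A : X →ₗ[k] X) (hAD : ∀ x, A x ∈ D₀)
    (hA : ∀ (m : Γ) (x : X), A (ρ (ψ m) x) = ρ m (A x))
    (𝒮 : Set (Submodule k X)) (h1 : ∀ S ∈ 𝒮, SimpleI ρ S)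
    (h2 : ∀ S ∈ 𝒮, ¬ TwIso ρ ψ S) (hgen : sSup 𝒮 = D₀) :
    trace k ↥D₀ (codRestrict D₀ (A ∘ₗ D₀.subtype) (fun x => hAD _)) = 0 := by
  classical
  set ρ₀ := resRep ρ hD with hρ₀
  have resRep_coe : ∀ (γ : Γ) (x : ↥D₀), ((ρ₀ γ x : ↥D₀) : X) = ρ γ (x : X) := fun _ _ => rfl
  have hSD : ∀ S ∈ 𝒮, S ≤ D₀ := fun S hS => hgen ▸ le_sSup hS
  set 𝒮' : Set (Submodule k ↥D₀) := (Submodule.comap D₀.subtype) '' 𝒮 with h𝒮'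
  have hmapinj : Function.Injective (Submodule.map D₀.subtype :
      Submodule k ↥D₀ → Submodule k X) :=
    Submodule.map_injective_of_injective D₀.injective_subtype
  have hmapcomap : ∀ S ∈ 𝒮, Submodule.map D₀.subtype (Submodule.comap D₀.subtype S) = S := by
    intro S hS
    rw [Submodule.map_comap_subtype]
    exact inf_eq_right.mpr (hSD S hS)
  refine core ρ₀ ψ hψ _ ?_ 𝒮' ?_ ?_ ?_
  · -- equivariance of the corestricted map
    intro m x
    apply Subtype.ext
    rw [codRestrict_apply]
    show A ((ρ₀ (ψ m) x : ↥D₀) : X) = ((ρ₀ m (codRestrict D₀ (A ∘ₗ D₀.subtype) _ x) : ↥D₀) : X)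
    rw [resRep_coe, resRep_coe, codRestrict_apply]
    exact hA m (x : X)
  · -- simplicity
    rintro S' ⟨S, hS, rfl⟩
    have hsimp := h1 S hS
    refine ⟨?_, ?_, ?_⟩
    · intro γ x hx
      show (ρ₀ γ x : X) ∈ S
      rw [resRep_coe]
      exact hsimp.1 γ _ hx
    · intro hbot
      apply hsimp.2.1
      rw [← hmapcomap S hS, hbot, Submodule.map_bot]
    · intro U hU hUinv
      have hU₁le : Submodule.map D₀.subtype U ≤ S := by
        rw [← hmapcomap S hS]
        exact Submodule.map_mono hU
      have hU₁inv : Inv ρ (Submodule.map D₀.subtype U) := by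
        rintro γ x ⟨u, hu, rfl⟩
        exact ⟨ρ₀ γ u, hUinv γ u hu, resRep_coe γ u⟩
      rcases hsimp.2.2 _ hU₁le hU₁inv with h | h
      · left; apply hmapinj; rw [h, Submodule.map_bot]
      · right; apply hmapinj; rw [h, hmapcomap S hS]
  · -- no twisted intertwiner
    rintro S' ⟨S, hS, rfl⟩ ⟨e', he'⟩
    apply h2 S hS
    set c := Submodule.comapSubtypeEquivOfLe (hSD S hS) with hc
    refine ⟨(c.symm.trans e').trans c, ?_⟩
    intro m x hx
    set x' := c.symm x with hx'
    have hcoe : ((x' : ↥D₀) : X) = (x : X) := by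
      rw [hx']
      have := Submodule.comapSubtypeEquivOfLe_apply_coe (hSD S hS) (c.symm x)
      rw [LinearEquiv.apply_symm_apply] at this
      exact this.symm
    have hx0 : (ρ₀ (ψ m) (x' : ↥D₀)) ∈ Submodule.comap D₀.subtype S := by
      show ((ρ₀ (ψ m) (x' : ↥D₀)) : X) ∈ S
      rw [resRep_coe, hcoe]
      exact hx
    have key := he' m x' hx0
    have hsymm : c.symm ⟨ρ (ψ m) (x : X), hx⟩ = ⟨ρ₀ (ψ m) (x' : ↥D₀), hx0⟩ := by
      apply c.injective
      rw [LinearEquiv.apply_symm_apply]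
      apply Subtype.ext
      rw [Submodule.comapSubtypeEquivOfLe_apply_coe]
      show (ρ (ψ m) (x : X)) = ((ρ₀ (ψ m) (x' : ↥D₀)) : X)
      rw [resRep_coe, hcoe]
    show ((c ((e' (c.symm ⟨ρ (ψ m) (x : X), hx⟩)))) : X) = ρ m ((c (e' (c.symm x))) : X)
    rw [hsymm, Submodule.comapSubtypeEquivOfLe_apply_coe,
      Submodule.comapSubtypeEquivOfLe_apply_coe]
    have keyX : ((e' ⟨ρ₀ (ψ m) (x' : ↥D₀), hx0⟩ : Submodule.comap D₀.subtype S) : X)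
        = ((ρ₀ m ((e' x' : Submodule.comap D₀.subtype S) : ↥D₀)) : X) :=
      congrArg Subtype.val key
    rw [keyX, resRep_coe]
  · -- generation
    apply hmapinj
    rw [map_sSup'', Submodule.map_subtype_top]
    have himg : Submodule.map D₀.subtype '' 𝒮' = 𝒮 := by
      rw [h𝒮', ← Set.image_comp]
      ext S
      constructor
      · rintro ⟨S₀, hS₀, rfl⟩
        have := hmapcomap S₀ hS₀
        simpa [Function.comp, this] using hS₀
      · intro hS
        exact ⟨S, hS, hmapcomap S hS⟩
    rw [himg, hgen]

end Res

end PTaux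
section PTapp

open LinearMap

variable {𝕜 : Type*} [Field 𝕜] {G : Type*} [Group G]
  {V : Type*} [AddCommGroup V] [Module 𝕜 V]

namespace PTapp

variable (π : G →* (V ≃ₗ[𝕜] V)) (K : Subgroup G)

theorem pi_comp (a b : G) (x : V) : π a (π b x) = π (a * b) x := by
  rw [map_mul]; rfl

theorem pi_cancel (c : G) (x : V) : π c⁻¹ (π c x) = x := by
  rw [pi_comp, inv_mul_cancel, map_one]; rfl

theorem comp_id (c : G) :
    (π c⁻¹).toLinearMap ∘ₗ (π c).toLinearMap = LinearMap.id := by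
  ext x; exact pi_cancel π c x

theorem map_double (c : G) (W : Submodule 𝕜 V) :
    Submodule.map (π c⁻¹).toLinearMap (Submodule.map (π c).toLinearMap W) = W := by
  rw [← Submodule.map_comp, comp_id, Submodule.map_id]

theorem subrep_map {c : G} (hc : c ∈ K) {W : Submodule 𝕜 V} (hW : IsSubrep π K W) :
    IsSubrep π K (W.map (π c).toLinearMap) := by
  rintro c' hc' x ⟨w, hw, rfl⟩
  refine ⟨π (c⁻¹ * c' * c) w, hW _ (mul_mem (mul_mem (inv_mem hc) hc') hc) w hw, ?_⟩
  show π c (π (c⁻¹ * c' * c) w) = π c' (π c w)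
  rw [pi_comp, pi_comp]
  congr 1
  group

variable {Wd : Type*} [AddCommGroup Wd] [Module 𝕜 Wd] (d : K →* (Wd ≃ₗ[𝕜] Wd))

theorem isoToRep_map {c : G} (hc : c ∈ K) {W : Submodule 𝕜 V} (hW : IsSubrep π K W)
    (hiso : IsoToRep π K W d) : IsoToRep π K (W.map (π c).toLinearMap) d := by
  obtain ⟨e, he⟩ := hiso
  set m₁ := (π c).submoduleMap W with hm₁
  refine ⟨(m₁.symm.trans e).trans (d ⟨c, hc⟩), ?_⟩
  intro c' y hy
  set x := m₁.symm y with hxdef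
  have hx : π c (x : V) = (y : V) := by
    have := LinearEquiv.submoduleMap_apply (π c) W x
    rw [hxdef, LinearEquiv.apply_symm_apply] at this
    exact this.symm
  obtain ⟨c'', hc''⟩ : ∃ c'' : K, c'' = (⟨c, hc⟩ : K)⁻¹ * c' * ⟨c, hc⟩ := ⟨_, rfl⟩
  have hxx : π (c'' : G) (x : V) ∈ W := hW _ c''.2 _ x.2
  have hkey : m₁.symm ⟨π (c' : G) (y : V), hy⟩ = ⟨π (c'' : G) (x : V), hxx⟩ := by
    apply m₁.injective
    rw [LinearEquiv.apply_symm_apply]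
    apply Subtype.ext
    rw [LinearEquiv.submoduleMap_apply]
    show π (c' : G) (y : V) = π c (π (c'' : G) (x : V))
    rw [pi_comp, ← hx, pi_comp]
    congr 1
    rw [hc'']
    simp only [Subgroup.coe_mul, InvMemClass.coe_inv]
    group
  show d ⟨c, hc⟩ (e (m₁.symm ⟨π (c' : G) (y : V), hy⟩)) = d c' (d ⟨c, hc⟩ (e (m₁.symm y)))
  rw [hkey, he c'' x hxx]
  have : d ⟨c, hc⟩ (d c'' (e x)) = d (⟨c, hc⟩ * c'') (e x) := by rw [map_mul]; rfl
  rw [this]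
  have h2 : d c' (d ⟨c, hc⟩ (e x)) = d (c' * ⟨c, hc⟩) (e x) := by rw [map_mul]; rfl
  rw [← hxdef, h2]
  congr 2
  rw [hc'']
  group

theorem simple_map {c : G} (hc : c ∈ K) {W : Submodule 𝕜 V} (hW : IsSimpleSubrep π K W) :
    IsSimpleSubrep π K (W.map (π c).toLinearMap) := by
  refine ⟨subrep_map π K hc hW.1, ?_, ?_⟩
  · intro hbot
    apply hW.2.1
    rw [← map_double π c W, hbot, Submodule.map_bot]
  · intro U hU hUsub
    have h1 : Submodule.map (π c⁻¹).toLinearMap U ≤ W := by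
      rw [← map_double π c W]
      exact Submodule.map_mono hU
    have h2 := hW.2.2 _ h1 (subrep_map π K (inv_mem hc) hUsub)
    have hUeq : U = Submodule.map (π c).toLinearMap (Submodule.map (π c⁻¹).toLinearMap U) := by
      have := map_double π c⁻¹ U
      rw [inv_inv] at this
      exact this.symm
    rcases h2 with h | h
    · left; rw [hUeq, h, Submodule.map_bot]
    · right; rw [hUeq, h]

theorem notiso_map {c : G} (hc : c ∈ K) {W : Submodule 𝕜 V} (hW : IsSubrep π K W)
    (hni : ¬ IsoToRep π K W d) : ¬ IsoToRep π K (W.map (π c).toLinearMap) d := by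
  intro hiso
  apply hni
  have := isoToRep_map π K d (inv_mem hc) (subrep_map π K hc hW) hiso
  rwa [map_double] at this

theorem subrep_of_map_le {T : Submodule 𝕜 V}
    (hmaps : ∀ c ∈ K, Submodule.map (π c).toLinearMap T ≤ T) : IsSubrep π K T :=
  fun c hc x hx => hmaps c hc ⟨x, hx, rfl⟩

theorem subrep_isotypic : IsSubrep π K (IsotypicComponent π K d) := by
  apply subrep_of_map_le
  intro c hc
  rw [IsotypicComponent, PTaux.map_sSup'']
  apply sSup_le_sSup
  rintro W ⟨W', ⟨hsub, hiso⟩, rfl⟩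
  exact ⟨subrep_map π K hc hsub, isoToRep_map π K d hc hsub hiso⟩

theorem subrep_other : IsSubrep π K
    (sSup {W : Submodule 𝕜 V | IsSimpleSubrep π K W ∧ ¬ IsoToRep π K W d}) := by
  apply subrep_of_map_le
  intro c hc
  rw [PTaux.map_sSup'']
  apply sSup_le_sSup
  rintro W ⟨W', ⟨hsimp, hni⟩, rfl⟩
  exact ⟨simple_map π K hc hsimp, notiso_map π K d hc hsimp.1 hni⟩

end PTapp

end PTapp
/-- Let `N ⊴ K` be subgroups of `G`, and `g ∈ G` normalizing both `K`
and `N`.  Suppose `V` is semisimple as a `K`-module, `(d, Wd)` is a simple representation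
of `K` whose isotypic component `V_d` is nonzero and finite-dimensional, `E` is the
projection onto `V_d` along the sum of all the other isotypic components, and `Wd`, as a
representation of `N` by restriction, is the internal direct sum of finitely many simple
`N`-submodules `W₁, …, Wₙ`.  If the partial trace `Θ_d(g)` of `u ↦ E (π g u)` on `V_d` is
nonzero, then for some `i` the `g`-twist `ᵍdᵢ` (given by `ᵍdᵢ(m) = dᵢ(g⁻¹ m g)`) is
`N`-isomorphic to `dᵢ`. -/
theorem partial_trace_nonzero_implies_constituent_intertwining
    (π : G →* (V ≃ₗ[𝕜] V)) (K N : Subgroup G) (g : G)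
    (hNK : N ≤ K)
    (hnormal : ∀ c ∈ K, ∀ m ∈ N, c * m * c⁻¹ ∈ N)
    (hgK : ∀ x : G, g * x * g⁻¹ ∈ K ↔ x ∈ K)
    (hgN : ∀ x : G, g * x * g⁻¹ ∈ N ↔ x ∈ N)
    (hsemisimple : sSup {W : Submodule 𝕜 V | IsSimpleSubrep π K W} = ⊤)
    {Wd : Type*} [AddCommGroup Wd] [Module 𝕜 Wd]
    (d : K →* (Wd ≃ₗ[𝕜] Wd)) (hd : IsSimpleRep d)
    (hne : IsotypicComponent π K d ≠ ⊥)
    (hfin : FiniteDimensional 𝕜 (IsotypicComponent π K d))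
    (E : V →ₗ[𝕜] V)
    (hproj : ∀ x ∈ IsotypicComponent π K d, E x = x)
    (hker : ∀ x ∈ sSup {W : Submodule 𝕜 V | IsSimpleSubrep π K W ∧ ¬ IsoToRep π K W d},
      E x = 0)
    (hrange : ∀ x : V, E x ∈ IsotypicComponent π K d)
    (n : ℕ) (Ws : Fin n → Submodule 𝕜 Wd)
    (hWs : ∀ i, IsSimpleNInvariant N d (Ws i))
    (hindep : iSupIndep Ws)
    (hsup : (⨆ i, Ws i) = ⊤)
    (hΘ : LinearMap.trace 𝕜 (IsotypicComponent π K d)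
      (LinearMap.codRestrict (IsotypicComponent π K d)
        (E ∘ₗ (π g).toLinearMap ∘ₗ (IsotypicComponent π K d).subtype)
        (fun _ => hrange _)) ≠ 0) :
    ∃ (i : Fin n) (e : Ws i ≃ₗ[𝕜] Ws i),
      ∀ (m m' : K), (m : G) ∈ N → (m' : G) = g⁻¹ * (m : G) * g →
        ∀ (x : Ws i) (hx : d m' (x : Wd) ∈ Ws i),
          (e ⟨d m' (x : Wd), hx⟩ : Wd) = d m ((e x : Wd)) := by
  classical
  by_contra hcon
  set D₀ := IsotypicComponent π K d with hD₀def
  have hDsub : IsSubrep π K D₀ := PTapp.subrep_isotypic π K d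
  set V₂ := sSup {W : Submodule 𝕜 V | IsSimpleSubrep π K W ∧ ¬ IsoToRep π K W d} with hV₂def
  have hV₂sub : IsSubrep π K V₂ := PTapp.subrep_other π K d
  have htop : D₀ ⊔ V₂ = ⊤ := by
    refine le_antisymm le_top ?_
    rw [← hsemisimple]
    apply sSup_le
    intro W hW
    by_cases hiso : IsoToRep π K W d
    · exact le_trans (le_sSup (Set.mem_setOf.mpr ⟨hW.1, hiso⟩)) le_sup_left
    · exact le_trans (le_sSup (Set.mem_setOf.mpr ⟨hW, hiso⟩)) le_sup_right
  have hEcomm : ∀ c ∈ K, ∀ x : V, E (π c x) = π c (E x) := by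
    intro c hc x
    have hx : x ∈ D₀ ⊔ V₂ := by rw [htop]; exact Submodule.mem_top
    obtain ⟨y, hy, z, hz, hyz⟩ := Submodule.mem_sup.mp hx
    rw [← hyz]
    calc E (π c (y + z)) = E (π c y) + E (π c z) := by rw [map_add, map_add]
      _ = π c y := by rw [hproj _ (hDsub c hc y hy), hker _ (hV₂sub c hc z hz), add_zero]
      _ = π c (E y + E z) := by rw [hproj y hy, hker z hz, add_zero]
      _ = π c (E (y + z)) := by rw [← map_add]
  have hgN' : ∀ x ∈ N, g⁻¹ * x * g ∈ N := by
    intro x hx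
    apply (hgN (g⁻¹ * x * g)).mp
    have h : g * (g⁻¹ * x * g) * g⁻¹ = x := by group
    rw [h]; exact hx
  set ψ : (↥N) →* (↥N) := {
    toFun := fun m => ⟨g⁻¹ * (m : G) * g, hgN' _ m.2⟩
    map_one' := Subtype.ext (by
      show g⁻¹ * ((1 : ↥N) : G) * g = ((1 : ↥N) : G)
      rw [OneMemClass.coe_one]; group)
    map_mul' := fun a b => Subtype.ext (by
      show g⁻¹ * ((a : G) * (b : G)) * g = (g⁻¹ * (a : G) * g) * (g⁻¹ * (b : G) * g)
      group) } with hψdef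
  have hψsurj : Function.Surjective ψ := by
    intro m
    refine ⟨⟨g * (m : G) * g⁻¹, (hgN _).mpr m.2⟩, ?_⟩
    apply Subtype.ext
    show g⁻¹ * (g * (m : G) * g⁻¹) * g = (m : G)
    group
  set πN : (↥N) →* (V ≃ₗ[𝕜] V) := π.comp N.subtype with hπNdef
  have hD : PTaux.Inv πN D₀ := fun m x hx => hDsub (m : G) (hNK m.2) x hx
  set A : V →ₗ[𝕜] V := E ∘ₗ (π g).toLinearMap with hAdef
  have hAD : ∀ x, A x ∈ D₀ := fun x => hrange _
  have hA : ∀ (m : ↥N) (x : V), A (πN (ψ m) x) = πN m (A x) := by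
    intro m x
    show E (π g (π (g⁻¹ * (m : G) * g) x)) = π (m : G) (E (π g x))
    rw [PTapp.pi_comp, show g * (g⁻¹ * (m : G) * g) = (m : G) * g by group,
      ← PTapp.pi_comp, hEcomm (m : G) (hNK m.2)]
  set 𝒮 : Set (Submodule 𝕜 V) :=
    {S | PTaux.SimpleI πN S ∧ ¬ PTaux.TwIso πN ψ S ∧ S ≤ D₀} with h𝒮def
  have hgen : sSup 𝒮 = D₀ := by
    refine le_antisymm (sSup_le fun S hS => hS.2.2) ?_
    conv_lhs => rw [hD₀def, IsotypicComponent]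
    apply sSup_le
    rintro W' ⟨hW'sub, e, he⟩
    have hW'le : W' ≤ D₀ := by
      rw [hD₀def, IsotypicComponent]
      exact le_sSup ⟨hW'sub, e, he⟩
    set f : Wd →ₗ[𝕜] V := W'.subtype ∘ₗ (e.symm : Wd →ₗ[𝕜] W') with hfdef
    have hfinj : Function.Injective f := by
      intro a b hab
      apply e.symm.injective
      apply Subtype.ext
      exact hab
    have hfcoe : ∀ w : Wd, f w = ((e.symm w : W') : V) := fun w => rfl
    have hesymm : ∀ (c : K) (w : Wd), f (d c w) = π (c : G) (f w) := by
      intro c w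
      have hxmem : π (c : G) ((e.symm w : W') : V) ∈ W' := hW'sub _ c.2 _ (e.symm w).2
      have h1 := he c (e.symm w) hxmem
      rw [e.apply_symm_apply] at h1
      have h2 := congrArg e.symm h1
      rw [e.symm_apply_apply] at h2
      rw [hfcoe, hfcoe, ← h2]
    set U : Fin n → Submodule 𝕜 V := fun i => Submodule.map f (Ws i) with hUdef
    have hUsup : (⨆ i, U i) = W' := by
      rw [hUdef, ← Submodule.map_iSup f Ws, hsup, Submodule.map_top]
      rw [hfdef, LinearMap.range_comp, LinearEquiv.range, Submodule.map_subtype_top]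
    have hUmem : ∀ i, U i ∈ 𝒮 := by
      intro i
      have hUW' : U i ≤ W' := by
        rintro y ⟨w, hw, rfl⟩
        exact (e.symm w).2
      refine ⟨⟨?_, ?_, ?_⟩, ?_, le_trans hUW' hW'le⟩
      · -- invariance
        rintro m y ⟨w, hw, rfl⟩
        refine ⟨d ⟨(m : G), hNK m.2⟩ w, (hWs i).1 ⟨(m : G), hNK m.2⟩ m.2 w hw, ?_⟩
        exact hesymm ⟨(m : G), hNK m.2⟩ w
      · -- nonzero
        intro hbot
        apply (hWs i).2.1
        apply Submodule.map_injective_of_injective hfinj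
        rw [Submodule.map_bot]
        exact hbot
      · -- minimality
        intro U' hU' hU'inv
        have hU₀le : Submodule.comap f U' ≤ Ws i := by
          intro w hw
          obtain ⟨w'', hw'', heq⟩ := hU' hw
          rwa [hfinj heq] at hw''
        have hU₀inv : IsNInvariant N d (Submodule.comap f U') := by
          intro mK hmN w hw
          show f (d mK w) ∈ U'
          rw [hesymm mK w]
          exact hU'inv ⟨(mK : G), hmN⟩ (f w) hw
        have hU'eq : U' = Submodule.map f (Submodule.comap f U') := by
          rw [Submodule.map_comap_eq]
          symm
          apply inf_eq_right.mpr
          refine le_trans hU' ?_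
          rintro y ⟨w, _, rfl⟩
          exact LinearMap.mem_range_self f w
        rcases (hWs i).2.2 _ hU₀le hU₀inv with h | h
        · left; rw [hU'eq, h, Submodule.map_bot]
        · right; rw [hU'eq, h]
      · -- no twisted intertwiner
        rintro ⟨e', he'⟩
        apply hcon
        set ciso := Submodule.equivMapOfInjective f hfinj (Ws i) with hcisodef
        have hcisocoe : ∀ x : Ws i, ((ciso x : U i) : V) = f (x : Wd) :=
          fun x => Submodule.coe_equivMapOfInjective_apply f hfinj (Ws i) x
        refine ⟨i, (ciso.trans e').trans ciso.symm, ?_⟩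
        intro m m' hmN hm' x hx
        have hm'K : ((⟨(m : G), hmN⟩ : ↥N) : G) ∈ N := hmN
        set γ : ↥N := ⟨(m : G), hmN⟩ with hγdef
        have hψγ : ((ψ γ : ↥N) : G) = (m' : G) := by
          show g⁻¹ * (m : G) * g = (m' : G)
          rw [hm']
        have hfd : f (d m' (x : Wd)) = πN (ψ γ) ((ciso x : U i) : V) := by
          show f (d m' (x : Wd)) = π ((ψ γ : ↥N) : G) ((ciso x : U i) : V)
          rw [hψγ, hcisocoe, hesymm m']
        have hy : πN (ψ γ) ((ciso x : U i) : V) ∈ U i := by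
          rw [← hfd]
          exact ⟨d m' (x : Wd), hx, rfl⟩
        have hc1 : ciso ⟨d m' (x : Wd), hx⟩ = ⟨πN (ψ γ) ((ciso x : U i) : V), hy⟩ := by
          apply Subtype.ext
          rw [hcisocoe]
          exact hfd
        have key := he' γ (ciso x) hy
        apply hfinj
        have lhs1 : f ((((ciso.trans e').trans ciso.symm) ⟨d m' (x : Wd), hx⟩ : Ws i) : Wd)
            = ((e' ⟨πN (ψ γ) ((ciso x : U i) : V), hy⟩ : U i) : V) := by
          show f ((ciso.symm (e' (ciso ⟨d m' (x : Wd), hx⟩)) : Ws i) : Wd) = _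
          rw [hc1, ← hcisocoe (ciso.symm (e' ⟨πN (ψ γ) ((ciso x : U i) : V), hy⟩)),
            ciso.apply_symm_apply]
        rw [lhs1, key]
        have rhs1 : f (d m ((((ciso.trans e').trans ciso.symm) x : Ws i) : Wd))
            = π (m : G) ((e' (ciso x) : U i) : V) := by
          rw [hesymm m]
          show π (m : G) (f ((ciso.symm (e' (ciso x)) : Ws i) : Wd)) = _
          rw [← hcisocoe (ciso.symm (e' (ciso x))), ciso.apply_symm_apply]
        rw [rhs1]
        rfl
    calc W' = ⨆ i, U i := hUsup.symm
      _ ≤ sSup 𝒮 := iSup_le fun i => le_sSup (hUmem i)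
  have h0 := PTaux.outer πN ψ hψsurj D₀ hD A hAD hA 𝒮
    (fun S hS => hS.1) (fun S hS => hS.2.1) hgen
  apply hΘ
  rw [← h0]
  congr 1
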